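/- Let C = 1 − I_{d×d} be the 0-1 cost matrix (c_{ij} = 1 if i ≠ j, c_{ii} = 0). For every α in the probability simplex △^d, the Sinkhorn negentropy with cost C/ε converges to the negative Shannon entropy as ε → 0: lim_{ε→0} Ω_{C/ε}(α) = Σ_{i=1}^d α_i log α_i (with the convention 0 log 0 = 0). -/

import Mathlib

open Finset Real Filter

noncomputable section

/-- The probability simplex in `ℝ^d`. -/
def simplexS (d : ℕ) : Set (Fin d → ℝ) := stdSimplex ℝ (Fin d)

/-- Transport plans between `α` and `β`: nonnegative matrices with prescribed marginals,
supported where `α i * β j > 0`. -/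
def couplings {d : ℕ} (α β : Fin d → ℝ) : Set (Matrix (Fin d) (Fin d) ℝ) :=
  {p | (∀ i j, 0 ≤ p i j) ∧ (∀ i, ∑ j, p i j = α i) ∧ (∀ j, ∑ i, p i j = β j) ∧
    ∀ i j, α i * β j = 0 → p i j = 0}

/-- The entropy-regularized transport cost of a plan `p` (with the convention `0 log 0 = 0`,
which holds automatically since `Real.log 0 = 0`). -/
def OTcost {d : ℕ} (C : Matrix (Fin d) (Fin d) ℝ) (ε : ℝ) (α β : Fin d → ℝ)
    (p : Matrix (Fin d) (Fin d) ℝ) : ℝ :=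
  (∑ i, ∑ j, p i j * C i j) + ε * ∑ i, ∑ j, p i j * Real.log (p i j / (α i * β j))

/-- Entropy-regularized optimal transport cost `OT_{C,ε}(α,β)`. -/
def OT {d : ℕ} (C : Matrix (Fin d) (Fin d) ℝ) (ε : ℝ) (α β : Fin d → ℝ) : ℝ :=
  sInf (OTcost C ε α β '' couplings α β)

/-- The Sinkhorn negentropy `Ω_C(α) = -(1/2) OT_{C,2}(α,α)`. -/
def Omega {d : ℕ} (C : Matrix (Fin d) (Fin d) ℝ) (α : Fin d → ℝ) : ℝ :=
  -(1 / 2) * OT C 2 α α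

-- entropy split
lemma entropy_split {d : ℕ} (α : Fin d → ℝ) (p : Matrix (Fin d) (Fin d) ℝ)
    (hp : p ∈ couplings α α) :
    ∑ i, ∑ j, p i j * Real.log (p i j / (α i * α j))
      = (∑ i, ∑ j, p i j * Real.log (p i j)) - 2 * ∑ i, α i * Real.log (α i) := by
  obtain ⟨hpos, hrow, hcol, hsupp⟩ := hp
  have key : ∀ i j, p i j * Real.log (p i j / (α i * α j))
      = p i j * Real.log (p i j) - p i j * Real.log (α i) - p i j * Real.log (α j) := by
    intro i j
    by_cases h : p i j = 0
    · simp [h]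
    · have hne : α i * α j ≠ 0 := fun h0 => h (hsupp i j h0)
      have hai : α i ≠ 0 := fun h0 => hne (by rw [h0]; ring)
      have haj : α j ≠ 0 := fun h0 => hne (by rw [h0]; ring)
      rw [Real.log_div h hne, Real.log_mul hai haj]; ring
  have h1 : ∑ i, ∑ j, p i j * Real.log (α i) = ∑ i, α i * Real.log (α i) := by
    refine Finset.sum_congr rfl fun i _ => ?_
    rw [← Finset.sum_mul, hrow i]
  have h2 : ∑ i, ∑ j, p i j * Real.log (α j) = ∑ i, α i * Real.log (α i) := by
    rw [Finset.sum_comm]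
    refine Finset.sum_congr rfl fun j _ => ?_
    rw [← Finset.sum_mul, hcol j]
  calc ∑ i, ∑ j, p i j * Real.log (p i j / (α i * α j))
      = ∑ i, ∑ j, (p i j * Real.log (p i j) - p i j * Real.log (α i) - p i j * Real.log (α j)) := by
        exact Finset.sum_congr rfl fun i _ => Finset.sum_congr rfl fun j _ => key i j
    _ = (∑ i, ∑ j, p i j * Real.log (p i j)) - (∑ i, ∑ j, p i j * Real.log (α i))
          - (∑ i, ∑ j, p i j * Real.log (α j)) := by
        simp [Finset.sum_sub_distrib]
    _ = (∑ i, ∑ j, p i j * Real.log (p i j)) - 2 * ∑ i, α i * Real.log (α i) := by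
        rw [h1, h2]; ring

lemma aux_mul_log_ge (x : ℝ) (hx : 0 ≤ x) : x - 1 ≤ x * Real.log x := by
  rcases eq_or_lt_of_le hx with h | h
  · simp [← h]
  · have h1 : Real.log x⁻¹ ≤ x⁻¹ - 1 := Real.log_le_sub_one_of_pos (by positivity)
    rw [Real.log_inv] at h1
    have h2 : x * (-Real.log x) ≤ x * (x⁻¹ - 1) := mul_le_mul_of_nonneg_left h1 hx
    have h3 : x * x⁻¹ = 1 := mul_inv_cancel₀ (ne_of_gt h)
    nlinarith

lemma aux_fenchel (c x : ℝ) (hx : 0 ≤ x) : -Real.exp (-c) ≤ x * (Real.log x + c - 1) := by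
  rcases eq_or_lt_of_le hx with h | h
  · simp [← h]
    positivity
  · have hlq : Real.log (x * Real.exp c) = Real.log x + c := by
      rw [Real.log_mul (ne_of_gt h) (ne_of_gt (Real.exp_pos c)), Real.log_exp]
    have h1 : x * Real.exp c - 1 ≤ (x * Real.exp c) * Real.log (x * Real.exp c) :=
      aux_mul_log_ge _ (by positivity)
    have key : x * (Real.log x + c - 1)
        = Real.exp (-c) * ((x * Real.exp c) * (Real.log (x * Real.exp c) - 1)) := by
      rw [hlq, Real.exp_neg]
      have hec : Real.exp c ≠ 0 := ne_of_gt (Real.exp_pos c)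
      field_simp
    rw [key]
    have h4 : (-1 : ℝ) ≤ (x * Real.exp c) * (Real.log (x * Real.exp c) - 1) := by nlinarith
    have h5 : Real.exp (-c) * (-1) ≤ Real.exp (-c) * ((x * Real.exp c) * (Real.log (x * Real.exp c) - 1)) :=
      mul_le_mul_of_nonneg_left h4 (Real.exp_pos _).le
    linarith

lemma aux_cell (ε x : ℝ) (hε : 0 < ε) (hx : 0 ≤ x) :
    -2 * Real.exp (-(1 / (2 * ε))) ≤ x * (1 / ε) + 2 * (x * Real.log x) - 2 * x := by
  have h := aux_fenchel (1 / (2 * ε)) x hx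
  have he : (1 : ℝ) / ε = 2 * (1 / (2 * ε)) := by field_simp
  nlinarith

lemma aux_diag (x t : ℝ) (ht : 0 ≤ t) (htx : t ≤ x) (hx1 : x ≤ 1) :
    x * Real.log x - t ≤ (x - t) * Real.log (x - t) := by
  rcases eq_or_lt_of_le htx with h | h
  · have hx0 : 0 ≤ x := le_trans ht htx
    have hlog : x * Real.log x ≤ 0 :=
      mul_nonpos_iff.mpr (Or.inl ⟨hx0, Real.log_nonpos hx0 hx1⟩)
    subst h
    simp
    linarith
  · have hu : 0 < x - t := by linarith
    have hx0 : 0 < x := by linarith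
    have hlog : Real.log x - Real.log (x - t) = Real.log (x / (x - t)) := by
      rw [Real.log_div (ne_of_gt hx0) (ne_of_gt hu)]
    have h1 : Real.log (x / (x - t)) ≤ x / (x - t) - 1 := Real.log_le_sub_one_of_pos (by positivity)
    have h2 : (x - t) * Real.log (x / (x - t)) ≤ (x - t) * (x / (x - t) - 1) :=
      mul_le_mul_of_nonneg_left h1 hu.le
    have h3 : (x - t) * (x / (x - t) - 1) = t := by field_simp; ring
    have h4 : t * Real.log x ≤ 0 :=
      mul_nonpos_iff.mpr (Or.inl ⟨ht, Real.log_nonpos hx0.le hx1⟩)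
    nlinarith [hlog]

lemma lower_bound {d : ℕ} (ε : ℝ) (hε : 0 < ε) (α : Fin d → ℝ) (hα : α ∈ simplexS d)
    (p : Matrix (Fin d) (Fin d) ℝ) (hp : p ∈ couplings α α) :
    -2 * (∑ i, α i * Real.log (α i)) - 2 * (d : ℝ) ^ 2 * Real.exp (-(1 / (2 * ε)))
      ≤ OTcost (Matrix.of fun i j : Fin d => (if i = j then (0 : ℝ) else 1) / ε) 2 α α p := by
  obtain ⟨hpos, hrow, hcol, hsupp⟩ := hp
  set E := Real.exp (-(1 / (2 * ε))) with hE
  have hEpos : 0 < E := Real.exp_pos _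
  set S := ∑ i, α i * Real.log (α i) with hS
  -- per-row bound
  have row : ∀ i : Fin d,
      2 * (α i * Real.log (α i)) - 2 * (d : ℝ) * E
        ≤ (∑ j, p i j * ((if i = j then (0 : ℝ) else 1) / ε))
          + 2 * ∑ j, p i j * Real.log (p i j) := by
    intro i
    set m := ∑ j ∈ Finset.univ.erase i, p i j with hm
    have hm0 : 0 ≤ m := Finset.sum_nonneg fun j _ => hpos i j
    have hsum : p i i + m = α i := by
      rw [hm, Finset.add_sum_erase _ _ (Finset.mem_univ i), hrow i]
    have hα0 : 0 ≤ α i := hα.1 i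
    have hα1 : α i ≤ 1 := by
      have := Finset.single_le_sum (fun j (_ : j ∈ Finset.univ) => hα.1 j) (Finset.mem_univ i)
      rw [hα.2] at this
      exact this
    have hpii0 : 0 ≤ p i i := hpos i i
    have hpii : p i i = α i - m := by linarith
    -- cost sum
    have hcost : (∑ j, p i j * ((if i = j then (0 : ℝ) else 1) / ε))
        = ∑ j ∈ Finset.univ.erase i, p i j * (1 / ε) := by
      rw [← Finset.add_sum_erase _ (fun j => p i j * ((if i = j then (0 : ℝ) else 1) / ε))
        (Finset.mem_univ i)]
      have hz : (if i = i then (0 : ℝ) else 1) / ε = 0 := by simp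
      rw [hz, mul_zero, zero_add]
      refine Finset.sum_congr rfl fun j hj => ?_
      have : i ≠ j := fun h => (Finset.mem_erase.mp hj).1 h.symm
      rw [if_neg this]
    -- entropy sum
    have hent : (∑ j, p i j * Real.log (p i j))
        = p i i * Real.log (p i i) + ∑ j ∈ Finset.univ.erase i, p i j * Real.log (p i j) :=
      (Finset.add_sum_erase _ (fun j => p i j * Real.log (p i j)) (Finset.mem_univ i)).symm
    -- diagonal bound
    have hdiag : α i * Real.log (α i) - m ≤ p i i * Real.log (p i i) := by
      rw [hpii]
      exact aux_diag (α i) m hm0 (by linarith) hα1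
    -- off-diagonal cells
    have hcells : ∑ j ∈ Finset.univ.erase i, (-2 * E)
        ≤ ∑ j ∈ Finset.univ.erase i,
            (p i j * (1 / ε) + 2 * (p i j * Real.log (p i j)) - 2 * p i j) :=
      Finset.sum_le_sum fun j _ => aux_cell ε (p i j) hε (hpos i j)
    have hcard : ((Finset.univ.erase i).card : ℝ) ≤ (d : ℝ) := by
      have : (Finset.univ.erase i).card ≤ d := by
        calc (Finset.univ.erase i).card ≤ (Finset.univ : Finset (Fin d)).card :=
              Finset.card_le_card (Finset.erase_subset _ _)
          _ = d := by simp
      exact_mod_cast this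
    have hconst : -2 * (d : ℝ) * E ≤ ∑ j ∈ Finset.univ.erase i, (-2 * E) := by
      rw [Finset.sum_const, nsmul_eq_mul]
      nlinarith
    have hexpand : ∑ j ∈ Finset.univ.erase i,
          (p i j * (1 / ε) + 2 * (p i j * Real.log (p i j)) - 2 * p i j)
        = (∑ j ∈ Finset.univ.erase i, p i j * (1 / ε))
          + 2 * (∑ j ∈ Finset.univ.erase i, p i j * Real.log (p i j)) - 2 * m := by
      rw [hm, Finset.mul_sum, Finset.mul_sum, ← Finset.sum_add_distrib, ← Finset.sum_sub_distrib]
    rw [hcost, hent]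
    have := le_trans hconst hcells
    rw [hexpand] at this
    linarith
  -- sum over rows
  have total : 2 * S - 2 * (d : ℝ) ^ 2 * E
      ≤ (∑ i, ∑ j, p i j * ((if i = j then (0 : ℝ) else 1) / ε))
        + 2 * ∑ i, ∑ j, p i j * Real.log (p i j) := by
    have h := Finset.sum_le_sum fun i (_ : i ∈ (Finset.univ : Finset (Fin d))) => row i
    rw [Finset.sum_add_distrib] at h
    have hlhs : ∑ i : Fin d, (2 * (α i * Real.log (α i)) - 2 * (d : ℝ) * E)
        = 2 * S - 2 * (d : ℝ) ^ 2 * E := by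
      rw [Finset.sum_sub_distrib, ← Finset.mul_sum, Finset.sum_const, nsmul_eq_mul]
      simp [hS]
      ring
    rw [hlhs] at h
    rw [← Finset.mul_sum] at h
    linarith
  have hsplit := entropy_split α p ⟨hpos, hrow, hcol, hsupp⟩
  rw [OTcost]
  simp only [Matrix.of_apply]
  rw [hsplit]
  rw [← hS]
  linarith

lemma diag_mem {d : ℕ} (α : Fin d → ℝ) (hα : α ∈ simplexS d) :
    (Matrix.of fun i j : Fin d => if i = j then α i else 0) ∈ couplings α α := by
  refine ⟨fun i j => ?_, fun i => ?_, fun j => ?_, fun i j h => ?_⟩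
  · simp only [Matrix.of_apply]
    split
    · exact hα.1 i
    · exact le_refl 0
  · simp [Matrix.of_apply, Finset.sum_ite_eq]
  · simp [Matrix.of_apply, Finset.sum_ite_eq']
  · simp only [Matrix.of_apply]
    split
    · rename_i hij
      subst hij
      rcases mul_eq_zero.mp h with h0 | h0 <;> exact h0
    · rfl

lemma diag_cost {d : ℕ} (ε : ℝ) (α : Fin d → ℝ) :
    OTcost (Matrix.of fun i j : Fin d => (if i = j then (0 : ℝ) else 1) / ε) 2 α α
        (Matrix.of fun i j : Fin d => if i = j then α i else 0)
      = -2 * ∑ i, α i * Real.log (α i) := by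
  rw [OTcost]
  have h1 : (∑ i, ∑ j, (Matrix.of fun i j : Fin d => if i = j then α i else 0) i j *
      (Matrix.of fun i j : Fin d => (if i = j then (0 : ℝ) else 1) / ε) i j) = 0 := by
    refine Finset.sum_eq_zero fun i _ => Finset.sum_eq_zero fun j _ => ?_
    simp only [Matrix.of_apply]
    by_cases h : i = j <;> simp [h]
  have h2 : ∀ i : Fin d, (∑ j, (Matrix.of fun i j : Fin d => if i = j then α i else 0) i j *
      Real.log ((Matrix.of fun i j : Fin d => if i = j then α i else 0) i j / (α i * α j)))
      = -(α i * Real.log (α i)) := by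
    intro i
    rw [Finset.sum_eq_single i]
    · simp only [Matrix.of_apply, eq_self_iff_true, if_true]
      by_cases h : α i = 0
      · simp [h]
      · have : α i / (α i * α i) = (α i)⁻¹ := by field_simp
        rw [this, Real.log_inv]
        ring
    · intro j _ hj
      simp [Matrix.of_apply, Ne.symm hj]
    · intro h
      exact absurd (Finset.mem_univ i) h
  rw [h1]
  rw [Finset.sum_congr rfl fun i (_ : i ∈ Finset.univ) => h2 i]
  rw [Finset.sum_neg_distrib]
  ring

lemma Omega_bounds {d : ℕ} (ε : ℝ) (hε : 0 < ε) (α : Fin d → ℝ) (hα : α ∈ simplexS d) :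
    (∑ i, α i * Real.log (α i))
        ≤ Omega (Matrix.of fun i j : Fin d => (if i = j then (0 : ℝ) else 1) / ε) α
      ∧ Omega (Matrix.of fun i j : Fin d => (if i = j then (0 : ℝ) else 1) / ε) α
        ≤ (∑ i, α i * Real.log (α i)) + (d : ℝ) ^ 2 * Real.exp (-(1 / (2 * ε))) := by
  set C := Matrix.of fun i j : Fin d => (if i = j then (0 : ℝ) else 1) / ε with hC
  set S := ∑ i, α i * Real.log (α i) with hS
  set lb := -2 * S - 2 * (d : ℝ) ^ 2 * Real.exp (-(1 / (2 * ε))) with hlb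
  have hbdd : ∀ y ∈ OTcost C 2 α α '' couplings α α, lb ≤ y := by
    rintro y ⟨p, hp, rfl⟩
    exact lower_bound ε hε α hα p hp
  have hne : (OTcost C 2 α α '' couplings α α).Nonempty :=
    ⟨_, Set.mem_image_of_mem _ (diag_mem α hα)⟩
  have hupper : OT C 2 α α ≤ -2 * S := by
    rw [← diag_cost ε α]
    exact csInf_le ⟨lb, fun y hy => hbdd y hy⟩ (Set.mem_image_of_mem _ (diag_mem α hα))
  have hlower : lb ≤ OT C 2 α α := le_csInf hne hbdd
  rw [Omega]
  constructor <;> [skip; skip] <;> rw [hlb] at hlower <;> linarith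

/-- With the 0-1 cost `C = 1 - I`, the Sinkhorn negentropy `Ω_{C/ε}(α)` converges, as
`ε → 0⁺`, to the negative Shannon entropy `Σ_i α_i log α_i` (with `0 log 0 = 0`, which
holds automatically since `Real.log 0 = 0`). -/
theorem sinkhorn_negentropy_limit_shannon (d : ℕ) (hd : 1 ≤ d)
    (α : Fin d → ℝ) (hα : α ∈ simplexS d) :
    Filter.Tendsto
      (fun ε : ℝ =>
        Omega (Matrix.of fun i j : Fin d => (if i = j then (0 : ℝ) else 1) / ε) α)
      (nhdsWithin 0 (Set.Ioi 0)) (nhds (∑ i, α i * Real.log (α i))) := by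
  set S := ∑ i, α i * Real.log (α i) with hS
  have hexp : Filter.Tendsto (fun ε : ℝ => Real.exp (-(1 / (2 * ε))))
      (nhdsWithin 0 (Set.Ioi 0)) (nhds 0) := by
    have h1 : Filter.Tendsto (fun ε : ℝ => 1 / (2 * ε)) (nhdsWithin 0 (Set.Ioi 0)) Filter.atTop := by
      have h2 : Filter.Tendsto (fun ε : ℝ => ε⁻¹) (nhdsWithin 0 (Set.Ioi 0)) Filter.atTop :=
        tendsto_inv_nhdsGT_zero
      have h3 : Filter.Tendsto (fun ε : ℝ => (2 : ℝ)⁻¹ * ε⁻¹) (nhdsWithin 0 (Set.Ioi 0))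
          Filter.atTop := h2.const_mul_atTop (by norm_num)
      exact h3.congr fun ε => by rw [one_div, mul_inv]
    have h4 : Filter.Tendsto (fun ε : ℝ => -(1 / (2 * ε))) (nhdsWithin 0 (Set.Ioi 0))
        Filter.atBot := tendsto_neg_atTop_atBot.comp h1
    exact Real.tendsto_exp_atBot.comp h4
  have hub : Filter.Tendsto (fun ε : ℝ => S + (d : ℝ) ^ 2 * Real.exp (-(1 / (2 * ε))))
      (nhdsWithin 0 (Set.Ioi 0)) (nhds S) := by
    have := (tendsto_const_nhds (x := S) (f := nhdsWithin (0:ℝ) (Set.Ioi 0))).add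
      ((tendsto_const_nhds (x := (d : ℝ) ^ 2)).mul hexp)
    simpa using this
  refine tendsto_of_tendsto_of_tendsto_of_le_of_le' tendsto_const_nhds hub ?_ ?_
  · filter_upwards [self_mem_nhdsWithin] with ε hε
    exact (Omega_bounds ε hε α hα).1
  · filter_upwards [self_mem_nhdsWithin] with ε hε
    exact (Omega_bounds ε hε α hα).2
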